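/- Let λ₁, λ₂ > 0 and c > 0, and let R₁, R₂ be as in the context. Then ℙ(c R₂ ≤ R₁) = (λ₂/(c √λ₁)) · exp( λ₂²/(π λ₁ c²) ) · erfc( λ₂/(c √(π λ₁)) ). -/

import Mathlib

open MeasureTheory Real ProbabilityTheory

/-- The complementary error function `erfc(x) = (2/√π) ∫_x^∞ e^{−t²} dt`. -/
noncomputable def erfc (x : ℝ) : ℝ :=
  (2 / Real.sqrt π) * ∫ t in Set.Ioi x, Real.exp (-t ^ 2)

open Set Filter Topology

lemma my_integral_comp_add_right_Ioi (g : ℝ → ℝ) (a b : ℝ) :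
    (∫ x in Set.Ioi a, g (x + b)) = ∫ x in Set.Ioi (a + b), g x := by
  rw [← integral_indicator measurableSet_Ioi, ← integral_indicator measurableSet_Ioi,
    ← integral_add_right_eq_self (Set.indicator (Set.Ioi (a + b)) g) b]
  congr 1
  ext x
  by_cases h : a < x
  · rw [Set.indicator_of_mem (Set.mem_Ioi.mpr h), Set.indicator_of_mem (by simp only [Set.mem_Ioi]; linarith)]
  · rw [Set.indicator_of_notMem (fun hx => h (Set.mem_Ioi.mp hx)), Set.indicator_of_notMem
      (by simp only [Set.mem_Ioi, not_lt] at h ⊢; linarith)]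

lemma expPDFReal_eq (r x : ℝ) :
    ProbabilityTheory.exponentialPDFReal r x
      = Set.indicator (Set.Ici 0) (fun x => r * Real.exp (-(r * x))) x := by
  unfold ProbabilityTheory.exponentialPDFReal ProbabilityTheory.gammaPDFReal
  simp [Set.indicator_apply, Real.Gamma_one]

lemma survival_Ici {Ω : Type*} [MeasurableSpace Ω] (P : Measure Ω) [IsProbabilityMeasure P]
    (R₁ : Ω → ℝ) (hR₁ : Measurable R₁) (hnn : ∀ ω, 0 ≤ R₁ ω) (b : ℝ)
    (hsurv : ∀ r : ℝ, 0 ≤ r → P {ω | r < R₁ ω} = ENNReal.ofReal (Real.exp (-(b * r ^ 2))))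
    (y : ℝ) (hy : 0 ≤ y) :
    P {ω | y ≤ R₁ ω} = ENNReal.ofReal (Real.exp (-(b * y ^ 2))) := by
  rcases hy.eq_or_lt with rfl | hy
  · have h : {ω | (0:ℝ) ≤ R₁ ω} = Set.univ := Set.eq_univ_of_forall fun ω => hnn ω
    simp [h]
  · set s : ℕ → Set Ω := fun n => {ω | y - 1/(n+1) < R₁ ω} with hs_def
    have hmeas : ∀ n, MeasurableSet (s n) := fun n =>
      measurableSet_lt measurable_const hR₁
    have hanti : Antitone s := by
      intro n m hnm ω hω
      simp only [hs_def, Set.mem_setOf_eq] at *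
      have h1 : (1:ℝ)/(m+1) ≤ 1/(n+1) := by
        apply one_div_le_one_div_of_le
        · positivity
        · exact_mod_cast by omega
      linarith
    have hInter : ⋂ n, s n = {ω | y ≤ R₁ ω} := by
      ext ω
      simp only [Set.mem_iInter, hs_def, Set.mem_setOf_eq]
      constructor
      · intro h
        by_contra hlt
        push_neg at hlt
        obtain ⟨n, hn⟩ := exists_nat_one_div_lt (sub_pos.2 hlt)
        have := h n
        linarith
      · intro h n
        have : (0:ℝ) < 1/(n+1) := by positivity
        linarith
    have htend := tendsto_measure_iInter_atTop (μ := P)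
      (fun n => (hmeas n).nullMeasurableSet) hanti ⟨0, measure_ne_top _ _⟩
    rw [hInter] at htend
    have htend2 : Tendsto (P ∘ s) atTop
        (𝓝 (ENNReal.ofReal (Real.exp (-(b * y ^ 2))))) := by
      obtain ⟨N, hN⟩ := exists_nat_one_div_lt hy
      have hev : (fun n : ℕ => ENNReal.ofReal (Real.exp (-(b * (y - 1/(n+1)) ^ 2))))
          =ᶠ[atTop] (P ∘ s) := by
        filter_upwards [eventually_ge_atTop N] with n hn
        have h1 : (1:ℝ)/(n+1) ≤ 1/(N+1) := by
          apply one_div_le_one_div_of_le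
          · positivity
          · exact_mod_cast by omega
        exact (hsurv _ (by linarith)).symm
      refine Tendsto.congr' hev ?_
      have h0 : Tendsto (fun n : ℕ => y - 1/(n+1)) atTop (𝓝 y) := by
        have h : Tendsto (fun n : ℕ => 1 / ((n : ℝ) + 1)) atTop (𝓝 0) :=
          tendsto_one_div_add_atTop_nhds_zero_nat
        simpa using (tendsto_const_nhds (x := y) (f := atTop)).sub h
      have hcont : Continuous fun t : ℝ => ENNReal.ofReal (Real.exp (-(b * t^2))) :=
        ENNReal.continuous_ofReal.comp (Real.continuous_exp.comp (by continuity))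
      exact (hcont.tendsto y).comp h0
    exact tendsto_nhds_unique htend htend2

/-- Association probability with a tier 2 node: if `R₁, R₂` are independent nonnegative random
variables with `ℙ(R₁ > r) = exp(−π λ₁ r²)` and `ℙ(R₂ > r) = exp(−2 λ₂ r)` for `r ≥ 0`, then
`ℙ(c R₂ ≤ R₁) = (λ₂/(c √λ₁)) e^{λ₂²/(π λ₁ c²)} erfc(λ₂/(c √(π λ₁)))`. -/
theorem prob_assoc_tier_two {Ω : Type*} [MeasurableSpace Ω]
    (P : Measure Ω) [IsProbabilityMeasure P]
    (R₁ R₂ : Ω → ℝ) (hR₁ : Measurable R₁) (hR₂ : Measurable R₂)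
    (hindep : IndepFun R₁ R₂ P)
    (hR₁_nonneg : ∀ ω, 0 ≤ R₁ ω) (hR₂_nonneg : ∀ ω, 0 ≤ R₂ ω)
    (lam₁ lam₂ c : ℝ) (hlam₁ : 0 < lam₁) (hlam₂ : 0 < lam₂) (hc : 0 < c)
    (hsurv₁ : ∀ r : ℝ, 0 ≤ r →
      P {ω | r < R₁ ω} = ENNReal.ofReal (Real.exp (-(π * lam₁ * r ^ 2))))
    (hsurv₂ : ∀ r : ℝ, 0 ≤ r →
      P {ω | r < R₂ ω} = ENNReal.ofReal (Real.exp (-(2 * lam₂ * r)))) :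
    P {ω | c * R₂ ω ≤ R₁ ω}
      = ENNReal.ofReal ((lam₂ / (c * Real.sqrt lam₁)) *
          Real.exp (lam₂ ^ 2 / (π * lam₁ * c ^ 2)) *
          erfc (lam₂ / (c * Real.sqrt (π * lam₁)))) := by
  have hπ := Real.pi_pos
  set a : ℝ := π * lam₁ * c ^ 2 with ha_def
  have ha : 0 < a := by positivity
  -- Step B: product structure
  have hpair : Measurable fun ω => (R₂ ω, R₁ ω) := hR₂.prodMk hR₁
  have hsetS : MeasurableSet {p : ℝ × ℝ | c * p.1 ≤ p.2} :=
    measurableSet_le (measurable_fst.const_mul c) measurable_snd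
  have hmap : P.map (fun ω => (R₂ ω, R₁ ω)) = (P.map R₂).prod (P.map R₁) :=
    (indepFun_iff_map_prod_eq_prod_map_map hR₂.aemeasurable hR₁.aemeasurable).mp hindep.symm
  haveI : IsProbabilityMeasure (P.map R₁) := Measure.isProbabilityMeasure_map hR₁.aemeasurable
  haveI : IsProbabilityMeasure (P.map R₂) := Measure.isProbabilityMeasure_map hR₂.aemeasurable
  have step1 : P {ω | c * R₂ ω ≤ R₁ ω}
      = ∫⁻ r, (P.map R₁) {x | c * r ≤ x} ∂(P.map R₂) := by
    have e1 : P {ω | c * R₂ ω ≤ R₁ ω}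
        = P.map (fun ω => (R₂ ω, R₁ ω)) {p : ℝ × ℝ | c * p.1 ≤ p.2} := by
      rw [Measure.map_apply hpair hsetS]
      rfl
    rw [e1, hmap, Measure.prod_apply hsetS]
    rfl
  -- Step C: identify the law of R₂
  have h2l : 0 < 2 * lam₂ := by linarith
  have hpdf_meas : Measurable (exponentialPDF (2*lam₂)) :=
    (measurable_exponentialPDFReal (2*lam₂)).ennreal_ofReal
  have hmu2 : P.map R₂ = volume.withDensity (exponentialPDF (2*lam₂)) := by
    refine Measure.ext_of_Iic _ _ fun t => ?_
    rw [Measure.map_apply hR₂ measurableSet_Iic, withDensity_apply _ measurableSet_Iic,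
      lintegral_exponentialPDF_eq_antiDeriv h2l]
    by_cases ht : 0 ≤ t
    · have hset : R₂ ⁻¹' Iic t = {ω | t < R₂ ω}ᶜ := by ext ω; simp [not_lt]
      rw [hset, prob_compl_eq_one_sub (measurableSet_lt measurable_const hR₂), hsurv₂ t ht,
        if_pos ht, ENNReal.ofReal_sub _ (Real.exp_nonneg _), ENNReal.ofReal_one]
    · have hset : R₂ ⁻¹' Iic t = ∅ := by
        ext ω
        simp only [Set.mem_preimage, Set.mem_Iic, Set.mem_empty_iff_false, iff_false, not_le]
        exact lt_of_lt_of_le (lt_of_not_ge ht) (hR₂_nonneg ω)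
      rw [hset, if_neg ht]
      simp
  -- Step D: reduce to a lintegral of ofReal
  have step2 : P {ω | c * R₂ ω ≤ R₁ ω}
      = ∫⁻ r, ENNReal.ofReal
          (exponentialPDFReal (2*lam₂) r * Real.exp (-(π * lam₁ * (c*r)^2))) := by
    rw [step1, hmu2, lintegral_withDensity_eq_lintegral_mul_non_measurable _ hpdf_meas
      (ae_of_all _ fun x => ENNReal.ofReal_lt_top)]
    apply lintegral_congr
    intro r
    simp only [Pi.mul_apply]
    by_cases hr : 0 ≤ r
    · have hF : (P.map R₁) {x : ℝ | c * r ≤ x}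
          = ENNReal.ofReal (Real.exp (-(π * lam₁ * (c*r)^2))) := by
        have hms : MeasurableSet {x : ℝ | c * r ≤ x} := measurableSet_Ici
        rw [Measure.map_apply hR₁ hms]
        exact survival_Ici P R₁ hR₁ hR₁_nonneg (π * lam₁) hsurv₁ (c*r) (by positivity)
      rw [hF, exponentialPDF, ← ENNReal.ofReal_mul (exponentialPDFReal_nonneg h2l r)]
    · rw [exponentialPDF_of_neg (lt_of_not_ge hr), zero_mul, expPDFReal_eq,
        Set.indicator_of_notMem (by simpa using hr), zero_mul, ENNReal.ofReal_zero]
  -- Step E: to a real integral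
  set g₀ : ℝ → ℝ :=
    fun r => 2*lam₂ * Real.exp (-(2*lam₂*r)) * Real.exp (-(π * lam₁ * (c*r)^2)) with hg₀
  have hg₀meas : Measurable g₀ := by
    rw [hg₀]; fun_prop
  have hGind : ∀ r, exponentialPDFReal (2*lam₂) r * Real.exp (-(π * lam₁ * (c*r)^2))
      = Set.indicator (Set.Ici 0) g₀ r := by
    intro r
    rw [expPDFReal_eq]
    by_cases hr : r ∈ Set.Ici (0:ℝ)
    · rw [Set.indicator_of_mem hr, Set.indicator_of_mem hr]
    · rw [Set.indicator_of_notMem hr, Set.indicator_of_notMem hr, zero_mul]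
  have hGmeas : Measurable (Set.indicator (Set.Ici 0) g₀) :=
    hg₀meas.indicator measurableSet_Ici
  have hGint : Integrable (Set.indicator (Set.Ici 0) g₀) := by
    refine Integrable.mono
      ((integrable_exp_neg_mul_sq ha).const_mul (2*lam₂)) hGmeas.aestronglyMeasurable ?_
    apply ae_of_all
    intro r
    by_cases hr : r ∈ Set.Ici (0:ℝ)
    · rw [Set.indicator_of_mem hr]
      have h0 : (0:ℝ) ≤ r := hr
      have h1 : Real.exp (-(2*lam₂*r)) ≤ 1 := by
        rw [Real.exp_le_one_iff]
        nlinarith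
      have h2 : π * lam₁ * (c*r)^2 = a * r^2 := by rw [ha_def]; ring
      rw [Real.norm_eq_abs, Real.norm_eq_abs, abs_of_nonneg (by positivity),
        abs_of_nonneg (by positivity)]
      rw [hg₀]
      calc 2*lam₂ * Real.exp (-(2*lam₂*r)) * Real.exp (-(π * lam₁ * (c*r)^2))
          ≤ 2*lam₂ * 1 * Real.exp (-(π * lam₁ * (c*r)^2)) := by
            apply mul_le_mul_of_nonneg_right _ (Real.exp_nonneg _)
            exact mul_le_mul_of_nonneg_left h1 (by positivity)
        _ = 2*lam₂ * Real.exp (-a * r^2) := by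
            rw [mul_one]
            congr 1
            rw [h2]; ring
    · rw [Set.indicator_of_notMem hr, norm_zero]
      exact norm_nonneg _
  have step3 : P {ω | c * R₂ ω ≤ R₁ ω} = ENNReal.ofReal (∫ r in Set.Ioi (0:ℝ), g₀ r) := by
    rw [step2]
    simp_rw [hGind]
    rw [← ofReal_integral_eq_lintegral_ofReal hGint (ae_of_all _ fun r =>
      Set.indicator_nonneg (fun x _ => by rw [hg₀]; positivity) r)]
    rw [integral_indicator measurableSet_Ici, integral_Ici_eq_integral_Ioi]
  -- Step F: compute the real integral
  set s : ℝ := Real.sqrt a with hs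
  have hs0 : 0 < s := Real.sqrt_pos.mpr ha
  have hss : s * s = a := Real.mul_self_sqrt ha.le
  set d : ℝ := lam₂ / s with hd
  have hsd : s * d = lam₂ := by rw [hd]; field_simp
  have hd2 : d^2 = lam₂^2 / a := by rw [hd, div_pow, sq s, hss]
  have hexp : ∀ r : ℝ, g₀ r = (2*lam₂ * Real.exp (lam₂^2 / a)) * Real.exp (-(s*r + d)^2) := by
    intro r
    have h1 : (s*r + d)^2 = a*r^2 + 2*lam₂*r + lam₂^2/a := by
      have : (s*r + d)^2 = (s*s)*r^2 + 2*(s*d)*r + d^2 := by ring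
      rw [this, hss, hsd, hd2]
    have h2 : π * lam₁ * (c*r)^2 = a * r^2 := by rw [ha_def]; ring
    have h3 : -(2*lam₂*r) + -(π * lam₁ * (c*r)^2) = lam₂^2/a + -((s*r+d)^2) := by
      rw [h1, h2]; ring
    calc g₀ r = 2*lam₂ * Real.exp (-(2*lam₂*r) + -(π * lam₁ * (c*r)^2)) := by
          simp only [hg₀]
          rw [Real.exp_add]; ring
      _ = 2*lam₂ * Real.exp (lam₂^2/a + -((s*r+d)^2)) := by rw [h3]
      _ = (2*lam₂ * Real.exp (lam₂^2 / a)) * Real.exp (-(s*r + d)^2) := by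
          rw [Real.exp_add]; ring
  have hI : (∫ r in Set.Ioi (0:ℝ), g₀ r)
      = (2*lam₂ * Real.exp (lam₂^2/a)) * (s⁻¹ * ∫ x in Set.Ioi d, Real.exp (-x^2)) := by
    simp_rw [hexp]
    rw [integral_const_mul]
    congr 1
    have hcomp := integral_comp_mul_left_Ioi (fun x => Real.exp (-(x + d)^2)) 0 hs0
    rw [mul_zero] at hcomp
    calc (∫ r in Set.Ioi (0:ℝ), Real.exp (-(s*r + d)^2))
        = s⁻¹ • ∫ x in Set.Ioi (0:ℝ), Real.exp (-(x + d)^2) := hcomp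
      _ = s⁻¹ * ∫ x in Set.Ioi d, Real.exp (-x^2) := by
          rw [smul_eq_mul]
          congr 1
          have h := my_integral_comp_add_right_Ioi (fun x => Real.exp (-x^2)) 0 d
          simpa using h
  rw [step3, hI]
  congr 1
  unfold erfc
  have hsqrtpl : Real.sqrt (π*lam₁) = Real.sqrt π * Real.sqrt lam₁ :=
    Real.sqrt_mul Real.pi_pos.le _
  have hs_eq : s = Real.sqrt π * Real.sqrt lam₁ * c := by
    rw [hs, ha_def, Real.sqrt_mul (by positivity : (0:ℝ) ≤ π * lam₁) (c^2),
      Real.sqrt_sq hc.le, Real.sqrt_mul Real.pi_pos.le]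
  have hd_eq : d = lam₂ / (c * Real.sqrt (π*lam₁)) := by
    rw [hd, hs_eq, hsqrtpl]; ring_nf
  rw [hd_eq]
  have h1 : Real.sqrt π ≠ 0 := by positivity
  have h2 : Real.sqrt lam₁ ≠ 0 := by positivity
  rw [hs_eq]
  field_simp
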